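/- Let p be a prime, e ≥ 1 and n ≥ 1. The number CP(n, p^e) of congruence preserving functions ℤ/nℤ → ℤ/p^eℤ equals p^{e·n − Σ_{k=1}^{n−1} min(e, ⌊log_p k⌋)}. -/

import Mathlib

/-- `ulcm k` is the least common multiple of `1, 2, …, k`, with `ulcm 0 = 1`. -/
def ulcm (k : ℕ) : ℕ := (Finset.Icc 1 k).lcm id

/-- `mu m` is the largest prime power dividing `m`. -/
def mu (m : ℕ) : ℕ := m.primeFactors.sup fun p => p ^ m.factorization p

/-- `f : ZMod n → ZMod m` is congruence preserving. -/
def CongPres (n m : ℕ) (f : ZMod n → ZMod m) : Prop :=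
  ∀ d : ℕ, ∀ hd : d ∣ m, ∀ a b : ℕ, a < n → b < n → a ≡ b [MOD d] →
    ZMod.castHom hd (ZMod d) (f a) = ZMod.castHom hd (ZMod d) (f b)

/-- `CP n m` is the number of congruence preserving functions `ZMod n → ZMod m`. -/
noncomputable def CP (n m : ℕ) : ℕ := Nat.card {f : ZMod n → ZMod m // CongPres n m f}


lemma castHom_eq_iff {m d : ℕ} [NeZero m] (hd : d ∣ m) (x y : ZMod m) :
    ZMod.castHom hd (ZMod d) x = ZMod.castHom hd (ZMod d) y ↔ x.val ≡ y.val [MOD d] := by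
  rw [ZMod.castHom_apply, ZMod.castHom_apply, ← ZMod.natCast_val, ← ZMod.natCast_val,
    ZMod.natCast_eq_natCast_iff]

def Pfn (m n : ℕ) (f : Fin n → ZMod m) : Prop :=
  ∀ d : ℕ, d ∣ m → ∀ a b : ℕ, ∀ ha : a < n, ∀ hb : b < n, a ≡ b [MOD d] →
    (f ⟨a, ha⟩).val ≡ (f ⟨b, hb⟩).val [MOD d]

def Qfn (m n : ℕ) (g : Fin n → ZMod m) (x : ZMod m) : Prop :=
  ∀ d : ℕ, d ∣ m → ∀ a : ℕ, ∀ ha : a < n, a ≡ n [MOD d] → x.val ≡ (g ⟨a, ha⟩).val [MOD d]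

lemma sig_ext {β : Type*} {P : β → Prop} {γ : Type*} {Q : Subtype P → γ → Prop}
    (a b : Σ g : Subtype P, {x : γ // Q g x}) (h1 : a.1.1 = b.1.1) (h2 : a.2.1 = b.2.1) :
    a = b := by
  rcases a with ⟨⟨g, hg⟩, ⟨x, hx⟩⟩
  rcases b with ⟨⟨g', hg'⟩, ⟨x', hx'⟩⟩
  dsimp at h1 h2
  subst h1; subst h2; rfl

def snocEquiv (m n : ℕ) :
    {f : Fin (n+1) → ZMod m // Pfn m (n+1) f} ≃
      Σ g : {g : Fin n → ZMod m // Pfn m n g}, {x : ZMod m // Qfn m n g.1 x} where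
  toFun f := ⟨⟨Fin.init f.1, fun d hd a b ha hb hab =>
      f.2 d hd a b (ha.trans n.lt_succ_self) (hb.trans n.lt_succ_self) hab⟩,
    ⟨f.1 (Fin.last n), fun d hd a ha hab =>
      f.2 d hd n a n.lt_succ_self (ha.trans n.lt_succ_self) hab.symm⟩⟩
  invFun gx := ⟨Fin.snoc gx.1.1 gx.2.1, by
    intro d hd a b ha hb hab
    rcases Nat.lt_succ_iff_lt_or_eq.1 ha with ha' | ha' <;>
      rcases Nat.lt_succ_iff_lt_or_eq.1 hb with hb' | hb'
    · have h1 : (⟨a, ha⟩ : Fin (n+1)) = Fin.castSucc ⟨a, ha'⟩ := rfl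
      have h2 : (⟨b, hb⟩ : Fin (n+1)) = Fin.castSucc ⟨b, hb'⟩ := rfl
      rw [h1, h2, Fin.snoc_castSucc, Fin.snoc_castSucc]
      exact gx.1.2 d hd a b ha' hb' hab
    · have h1 : (⟨a, ha⟩ : Fin (n+1)) = Fin.castSucc ⟨a, ha'⟩ := rfl
      have h2 : (⟨b, hb⟩ : Fin (n+1)) = Fin.last n := Fin.ext hb'
      rw [h1, h2, Fin.snoc_castSucc, Fin.snoc_last]
      exact (gx.2.2 d hd a ha' (hb' ▸ hab)).symm
    · have h1 : (⟨a, ha⟩ : Fin (n+1)) = Fin.last n := Fin.ext ha'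
      have h2 : (⟨b, hb⟩ : Fin (n+1)) = Fin.castSucc ⟨b, hb'⟩ := rfl
      rw [h1, h2, Fin.snoc_castSucc, Fin.snoc_last]
      exact gx.2.2 d hd b hb' (ha' ▸ hab.symm)
    · have h1 : (⟨a, ha⟩ : Fin (n+1)) = (⟨b, hb⟩ : Fin (n+1)) := Fin.ext (ha'.trans hb'.symm)
      rw [h1]⟩
  left_inv f := Subtype.ext (Fin.snoc_init_self f.1)
  right_inv gx := by
    apply sig_ext
    · simp only []
      exact Fin.init_snoc _ _
    · simp only []
      exact Fin.snoc_last _ _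

lemma card_fiber (p e J : ℕ) (hp : p.Prime) (hJ : J ≤ e) (r : ℕ) :
    Nat.card {x : ZMod (p^e) // x.val ≡ r [MOD p^J]} = p^(e-J) := by
  haveI : NeZero (p^e) := ⟨(pow_pos hp.pos e).ne'⟩
  have hpJ : 0 < p^J := pow_pos hp.pos J
  have hlt : ∀ t : ℕ, t < p^(e-J) → r % p^J + t * p^J < p^e := by
    intro t ht
    calc r % p^J + t * p^J < p^J + t * p^J := by
          exact Nat.add_lt_add_right (Nat.mod_lt _ hpJ) _
      _ = (t+1) * p^J := by ring
      _ ≤ p^(e-J) * p^J := Nat.mul_le_mul_right _ ht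
      _ = p^e := by rw [← pow_add, Nat.sub_add_cancel hJ]
  have key : {x : ZMod (p^e) // x.val ≡ r [MOD p^J]} ≃ Fin (p^(e-J)) := {
    toFun := fun x => ⟨x.1.val / p^J, by
      rw [Nat.div_lt_iff_lt_mul hpJ, ← pow_add, Nat.sub_add_cancel hJ]
      exact x.1.val_lt⟩
    invFun := fun t => ⟨((r % p^J + t.1 * p^J : ℕ) : ZMod (p^e)), by
      show _ % _ = _ % _
      rw [ZMod.val_cast_of_lt (hlt t.1 t.2), Nat.add_mul_mod_self_right,
        Nat.mod_mod_of_dvd _ dvd_rfl]⟩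
    left_inv := fun x => by
      apply Subtype.ext
      have : r % p^J = x.1.val % p^J := x.2.symm
      show ((r % p^J + x.1.val / p^J * p^J : ℕ) : ZMod (p^e)) = x.1
      rw [this, Nat.mod_add_div', ZMod.natCast_zmod_val]
    right_inv := fun t => by
      apply Fin.ext
      show (((r % p^J + t.1 * p^J : ℕ) : ZMod (p^e))).val / p^J = t.1
      rw [ZMod.val_cast_of_lt (hlt t.1 t.2), Nat.add_mul_div_right _ _ hpJ,
        Nat.div_eq_of_lt (Nat.mod_lt _ hpJ), Nat.zero_add] }
  rw [Nat.card_congr key, Nat.card_eq_fintype_card, Fintype.card_fin]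

lemma Qfn_card (p e n : ℕ) (hp : p.Prime) (g : Fin n → ZMod (p^e)) (hg : Pfn (p^e) n g) :
    Nat.card {x : ZMod (p^e) // Qfn (p^e) n g x} = p ^ (e - min e (Nat.log p n)) := by
  haveI : NeZero (p^e) := ⟨(pow_pos hp.pos e).ne'⟩
  rcases Nat.eq_zero_or_pos n with rfl | hn
  · have htriv : ∀ x : ZMod (p^e), Qfn (p^e) 0 g x := by
      intro x d hd a ha; exact absurd ha (Nat.not_lt_zero a)
    rw [Nat.card_congr (Equiv.subtypeUnivEquiv htriv), Nat.card_zmod, Nat.log_zero_right,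
      Nat.min_zero, Nat.sub_zero]
  · set J := min e (Nat.log p n) with hJdef
    have hJe : J ≤ e := min_le_left _ _
    have hne : n ≠ 0 := hn.ne'
    have hpJn : p^J ≤ n :=
      le_trans (Nat.pow_le_pow_right hp.one_lt.le (min_le_right _ _)) (Nat.pow_log_le_self p hne)
    have hpJ : 0 < p^J := pow_pos hp.pos J
    have hsub : n - p^J < n := Nat.sub_lt hn hpJ
    have hmod : n - p^J ≡ n [MOD p^J] :=
      (Nat.modEq_iff_dvd' (Nat.sub_le _ _)).2 (by rw [Nat.sub_sub_self hpJn])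
    set r := (g ⟨n - p^J, hsub⟩).val with hrdef
    have hiff : ∀ x : ZMod (p^e), Qfn (p^e) n g x ↔ x.val ≡ r [MOD p^J] := by
      intro x
      constructor
      · intro hQ
        exact hQ (p^J) (pow_dvd_pow p hJe) (n - p^J) hsub hmod
      · intro h d hd a ha hab
        obtain ⟨j, hj, rfl⟩ := (Nat.dvd_prime_pow hp).1 hd
        rcases Nat.eq_zero_or_pos j with rfl | hjpos
        · simpa using Nat.modEq_one
        · have hdvd : p^j ∣ n - a := (Nat.modEq_iff_dvd' ha.le).1 hab
          have hle : p^j ≤ n := le_trans (Nat.le_of_dvd (Nat.sub_pos_of_lt ha) hdvd)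
            (Nat.sub_le _ _)
          have hjJ : j ≤ J := le_min hj ((Nat.le_log_iff_pow_le hp.one_lt hne).2 hle)
          have hd' : p^j ∣ p^J := pow_dvd_pow p hjJ
          have h1 : x.val ≡ r [MOD p^j] := h.of_dvd hd'
          have h2 : (n - p^J) ≡ a [MOD p^j] := (hmod.of_dvd hd').trans hab.symm
          exact h1.trans (hg (p^j) (dvd_trans hd' (pow_dvd_pow p hJe)) _ _ hsub ha h2)
    rw [Nat.card_congr (Equiv.subtypeEquivRight hiff), card_fiber p e J hp hJe r]

lemma nat_card_sigma {ι : Type*} [Finite ι] (f : ι → Type*) [∀ i, Finite (f i)] (N : ℕ)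
    (h : ∀ i, Nat.card (f i) = N) : Nat.card (Σ i, f i) = Nat.card ι * N := by
  classical
  cases nonempty_fintype ι
  haveI := fun i => Fintype.ofFinite (f i)
  rw [Nat.card_eq_fintype_card, Fintype.card_sigma, Nat.card_eq_fintype_card]
  rw [Finset.sum_congr rfl fun i _ => by rw [← Nat.card_eq_fintype_card, h i]]
  rw [Finset.sum_const, Finset.card_univ, smul_eq_mul]

lemma card_Pfn (p e : ℕ) (hp : p.Prime) (n : ℕ) :
    Nat.card {f : Fin n → ZMod (p^e) // Pfn (p^e) n f}
      = p ^ (∑ k ∈ Finset.range n, (e - min e (Nat.log p k))) := by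
  haveI : NeZero (p^e) := ⟨(pow_pos hp.pos e).ne'⟩
  induction n with
  | zero =>
    haveI : Unique {f : Fin 0 → ZMod (p^e) // Pfn (p^e) 0 f} :=
      ⟨⟨⟨fun i => i.elim0, fun d hd a b ha hb hab => absurd ha (Nat.not_lt_zero a)⟩⟩,
       fun f => Subtype.ext (funext fun i => i.elim0)⟩
    simp [Nat.card_unique]
  | succ n ih =>
    rw [Nat.card_congr (snocEquiv (p^e) n),
      nat_card_sigma
        (fun g : {g : Fin n → ZMod (p^e) // Pfn (p^e) n g} =>
          {x : ZMod (p^e) // Qfn (p^e) n g.1 x})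
        (p ^ (e - min e (Nat.log p n)))
        (fun g => Qfn_card p e n hp g.1 g.2),
      ih, ← pow_add, Finset.sum_range_succ]

lemma CP_eq (m : ℕ) [NeZero m] (k : ℕ) :
    CP (k+1) m = Nat.card {f : Fin (k+1) → ZMod m // Pfn m (k+1) f} := by
  have cast_eq : ∀ a : ℕ, ∀ ha : a < k+1, ((a : ℕ) : ZMod (k+1)) = (⟨a, ha⟩ : Fin (k+1)) := by
    intro a ha
    have h1 : ((a : ℕ) : ZMod (k+1)).val = a := by
      rw [ZMod.val_natCast, Nat.mod_eq_of_lt ha]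
    exact Fin.ext h1
  apply Nat.card_congr
  refine ⟨fun f => ⟨fun i => f.1 i, fun d hd a b ha hb hab => ?_⟩,
    fun g => ⟨fun z => g.1 z, fun d hd a b ha hb hab => ?_⟩,
    fun f => Subtype.ext rfl, fun g => Subtype.ext rfl⟩
  · have := f.2 d hd a b ha hb hab
    rw [castHom_eq_iff] at this
    rwa [cast_eq a ha, cast_eq b hb] at this
  · rw [castHom_eq_iff, cast_eq a ha, cast_eq b hb]
    exact g.2 d hd a b ha hb hab

theorem stmt_19 (p e n : ℕ) (hp : p.Prime) (he : 1 ≤ e) (hn : 1 ≤ n) :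
    CP n (p ^ e) =
      p ^ (e * n - ∑ k ∈ Finset.Icc 1 (n - 1), min e (Nat.log p k)) := by
  haveI : NeZero (p^e) := ⟨(pow_pos hp.pos e).ne'⟩
  obtain ⟨k, rfl⟩ : ∃ k, n = k + 1 := ⟨n - 1, (Nat.succ_pred_eq_of_pos hn).symm⟩
  rw [CP_eq, card_Pfn p e hp (k+1)]
  congr 1
  have h1 : (∑ j ∈ Finset.range (k+1), (e - min e (Nat.log p j)))
      + ∑ j ∈ Finset.range (k+1), min e (Nat.log p j) = (k+1) * e := by
    rw [← Finset.sum_add_distrib]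
    rw [Finset.sum_congr rfl fun j _ => Nat.sub_add_cancel (min_le_left e (Nat.log p j))]
    rw [Finset.sum_const, Finset.card_range, smul_eq_mul]
  have h2 : ∑ j ∈ Finset.range (k+1), min e (Nat.log p j)
      = ∑ j ∈ Finset.Icc 1 k, min e (Nat.log p j) := by
    rw [Finset.range_eq_Ico, Finset.sum_eq_sum_Ico_succ_bot (Nat.succ_pos k)]
    rw [Nat.log_zero_right, Nat.min_zero, Nat.zero_add, Nat.succ_eq_add_one, Finset.Ico_add_one_right_eq_Icc]
  have h3 : ∑ j ∈ Finset.Icc 1 k, min e (Nat.log p j) ≤ (k+1) * e := by omega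
  have h4 : e * (k+1) = (k+1) * e := Nat.mul_comm _ _
  simp only [Nat.add_sub_cancel]
  omega
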